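/- (Variance of the variance-reduced gradient difference.) Let Z be a nonempty finite type, let p : Z → ℝ be nonnegative weights with ∑_{z ∈ Z} p(z) = 1, and for each z ∈ Z let ℓ_z : ℝ^d → ℝ be differentiable with L-Lipschitz gradient (L ≥ 0). Define f = ∑_{z ∈ Z} p(z) · ℓ_z. Then for all x, y ∈ ℝ^d, ∑_{z ∈ Z} p(z) ‖∇ℓ_z(x) − ∇ℓ_z(y) − (∇f(x) − ∇f(y))‖² ≤ L² ‖x − y‖². -/

import Mathlib

open Finset

lemma grad_sum_aux {d : ℕ} {Z : Type*} [Fintype Z]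
    (p : Z → ℝ) (ℓ : Z → EuclideanSpace ℝ (Fin d) → ℝ)
    (hdiff : ∀ z, Differentiable ℝ (ℓ z)) (x : EuclideanSpace ℝ (Fin d)) :
    HasGradientAt (fun x => ∑ z, p z * ℓ z x)
      (∑ z, p z • gradient (ℓ z) x) x := by
  rw [hasGradientAt_iff_hasFDerivAt]
  have h1 : HasFDerivAt (fun x => ∑ z, p z * ℓ z x)
      (∑ z, p z • fderiv ℝ (ℓ z) x) x :=
    HasFDerivAt.fun_sum fun z _ => ((hdiff z x).hasFDerivAt).const_mul (p z)
  refine h1.congr_fderiv ?_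
  rw [map_sum]
  congr 1
  ext z
  rw [map_smul]
  congr 1
  simp [gradient]

/-- Variance of the variance-reduced gradient difference: for a weighted finite
mixture `f = ∑ z, p z • ℓ z` of `L`-smooth functions,
`∑ z, p z ‖∇ℓ_z x - ∇ℓ_z y - (∇f x - ∇f y)‖² ≤ L² ‖x - y‖²`. -/
theorem stmt_10 {d : ℕ} (Z : Type*) [Fintype Z] [Nonempty Z]
    (p : Z → ℝ) (hp : ∀ z, 0 ≤ p z) (hp1 : ∑ z, p z = 1)
    (ℓ : Z → EuclideanSpace ℝ (Fin d) → ℝ) (L : ℝ) (hL : 0 ≤ L)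
    (hdiff : ∀ z, Differentiable ℝ (ℓ z))
    (hlip : ∀ z, ∀ x y : EuclideanSpace ℝ (Fin d),
      ‖gradient (ℓ z) x - gradient (ℓ z) y‖ ≤ L * ‖x - y‖)
    (f : EuclideanSpace ℝ (Fin d) → ℝ) (hf : f = fun x => ∑ z, p z * ℓ z x) :
    ∀ x y : EuclideanSpace ℝ (Fin d),
      ∑ z, p z *
          ‖gradient (ℓ z) x - gradient (ℓ z) y - (gradient f x - gradient f y)‖ ^ 2
        ≤ L ^ 2 * ‖x - y‖ ^ 2 := by
  intro x y
  have hgf : ∀ u, gradient f u = ∑ z, p z • gradient (ℓ z) u := by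
    intro u
    rw [hf]
    exact (grad_sum_aux p ℓ hdiff u).gradient
  set g : Z → EuclideanSpace ℝ (Fin d) :=
    fun z => gradient (ℓ z) x - gradient (ℓ z) y with hg
  have hbar : gradient f x - gradient f y = ∑ z, p z • g z := by
    rw [hgf, hgf, ← Finset.sum_sub_distrib]
    simp [hg, smul_sub]
  set G : EuclideanSpace ℝ (Fin d) := ∑ z, p z • g z with hG
  rw [hbar]
  have key : ∑ z, p z * ‖g z - G‖ ^ 2 = (∑ z, p z * ‖g z‖ ^ 2) - ‖G‖ ^ 2 := by
    have expand : ∀ z, ‖g z - G‖ ^ 2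
        = ‖g z‖ ^ 2 - 2 * inner ℝ (g z) G + ‖G‖ ^ 2 := by
      intro z
      rw [norm_sub_sq_real]
    have hGG : ∑ z, p z * inner ℝ (g z) G = (‖G‖ : ℝ) ^ 2 := by
      rw [← real_inner_self_eq_norm_sq, hG, sum_inner]
      congr 1
      ext z
      rw [real_inner_smul_left]
    calc ∑ z, p z * ‖g z - G‖ ^ 2
        = ∑ z, (p z * ‖g z‖ ^ 2 - 2 * (p z * inner ℝ (g z) G) + p z * ‖G‖ ^ 2) := by
          apply Finset.sum_congr rfl; intro z _; rw [expand]; ring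
      _ = (∑ z, p z * ‖g z‖ ^ 2) - 2 * (∑ z, p z * inner ℝ (g z) G)
            + (∑ z, p z) * ‖G‖ ^ 2 := by
          rw [Finset.sum_add_distrib, Finset.sum_sub_distrib, ← Finset.mul_sum,
            ← Finset.sum_mul]
      _ = (∑ z, p z * ‖g z‖ ^ 2) - ‖G‖ ^ 2 := by rw [hGG, hp1]; ring
  rw [key]
  have h2 : ∑ z, p z * ‖g z‖ ^ 2 ≤ L ^ 2 * ‖x - y‖ ^ 2 := by
    calc ∑ z, p z * ‖g z‖ ^ 2 ≤ ∑ z, p z * (L * ‖x - y‖) ^ 2 := by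
          apply Finset.sum_le_sum
          intro z _
          exact mul_le_mul_of_nonneg_left
            (pow_le_pow_left₀ (norm_nonneg _) (hlip z x y) 2) (hp z)
      _ = L ^ 2 * ‖x - y‖ ^ 2 := by rw [← Finset.sum_mul, hp1]; ring
  nlinarith [sq_nonneg ‖G‖]
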